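/- For every t ∈ (0,T), the second moment of the explicit solution for the fitness f(x) = x² is finite and is given by ∫_ℝ x² u(t,x) dx = σ tan(2σt) + (cos(2σt))^{-2} · (∫_ℝ e^{tan(2σt)y²/(2σ)} y² u₀(y) dy) / (∫_ℝ e^{tan(2σt)y²/(2σ)} u₀(y) dy); this equals the mean fitness f̄(t) = ∫_ℝ x² u(t,x) dx. -/

import Mathlib

open MeasureTheory

/-- The explicit solution of the replicator-mutator equation with fitness `f(x) = x²`. -/
noncomputable def uTrig (σ : ℝ) (u₀ : ℝ → ℝ) (t x : ℝ) : ℝ :=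
  (Real.sqrt (2 * Real.pi * σ * Real.tan (2 * σ * t)))⁻¹
    * Real.exp (Real.tan (2 * σ * t) * x ^ 2 / (2 * σ))
    * (∫ y : ℝ, Real.exp (-(x / Real.cos (2 * σ * t) - y) ^ 2
        / (2 * σ * Real.tan (2 * σ * t))) * u₀ y)
    / (∫ y : ℝ, Real.exp (Real.tan (2 * σ * t) * y ^ 2 / (2 * σ)) * u₀ y)

/-- The maximal existence time `T` for the fitness `f(x) = x²`. -/
noncomputable def Tmax (σ : ℝ) (u₀ : ℝ → ℝ) : ℝ :=
  sSup {t : ℝ | 0 ≤ t ∧ t < Real.pi / (4 * σ) ∧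
    MeasureTheory.Integrable (fun y : ℝ => Real.exp (Real.tan (2 * σ * t) * y ^ 2 / (2 * σ)) * u₀ y)}

open Real Filter

lemma integrable_sq_mul_exp_neg_mul_sq {b : ℝ} (hb : 0 < b) :
    Integrable fun x : ℝ => x ^ 2 * Real.exp (-b * x ^ 2) := by
  have h := integrable_rpow_mul_exp_neg_mul_sq hb (s := 2) (by norm_num)
  have : ∀ x : ℝ, x ^ (2 : ℝ) = x ^ 2 := fun x => by
    rw [show (2:ℝ) = ((2:ℕ):ℝ) by norm_num, Real.rpow_natCast]
  simpa [this] using h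

lemma integral_sq_mul_exp_neg_mul_sq {b : ℝ} (hb : 0 < b) :
    ∫ x : ℝ, x ^ 2 * Real.exp (-b * x ^ 2) = Real.sqrt (Real.pi / b) / (2 * b) := by
  set F : ℝ → ℝ := fun x => x * Real.exp (-b * x ^ 2) with hF
  set F' : ℝ → ℝ := fun x => Real.exp (-b * x ^ 2) + x * (Real.exp (-b * x ^ 2) * (-b * (2 * x))) with hF'
  have hderiv : ∀ x : ℝ, HasDerivAt F (F' x) x := by
    intro x
    have h1 : HasDerivAt (fun x : ℝ => -b * x ^ 2) (-b * (2 * x)) x := by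
      simpa using ((hasDerivAt_pow 2 x).const_mul (-b))
    have h2 := (hasDerivAt_id x).mul (h1.exp)
    refine HasDerivAt.congr_deriv (f := F) h2 ?_
    simp [hF']
  have hint : Integrable F' := by
    apply Integrable.add (integrable_exp_neg_mul_sq hb)
    have : (fun x : ℝ => x * (Real.exp (-b * x ^ 2) * (-b * (2 * x))))
        = fun x : ℝ => (-2 * b) * (x ^ 2 * Real.exp (-b * x ^ 2)) := by
      funext x; ring
    rw [this]
    exact (integrable_sq_mul_exp_neg_mul_sq hb).const_mul _
  have htop : Tendsto F atTop (nhds 0) := by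
    refine squeeze_zero_norm (fun x => ?_) ((tendsto_rpow_abs_mul_exp_neg_mul_sq_cocompact hb 1).mono_left
        (by rw [cocompact_eq_atBot_atTop]; exact le_sup_right))
    simp [hF, abs_mul, Real.abs_exp]
  have hbot : Tendsto F atBot (nhds 0) := by
    refine squeeze_zero_norm (fun x => ?_) ((tendsto_rpow_abs_mul_exp_neg_mul_sq_cocompact hb 1).mono_left
        (by rw [cocompact_eq_atBot_atTop]; exact le_sup_left))
    simp [hF, abs_mul, Real.abs_exp]
  have h1 : ∫ x in Set.Ioi (0:ℝ), F' x = 0 - F 0 :=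
    integral_Ioi_of_hasDerivAt_of_tendsto (hderiv 0).continuousAt.continuousWithinAt
      (fun x _ => hderiv x) hint.integrableOn htop
  have h2 : ∫ x in Set.Iic (0:ℝ), F' x = F 0 - 0 :=
    integral_Iic_of_hasDerivAt_of_tendsto (hderiv 0).continuousAt.continuousWithinAt
      (fun x _ => hderiv x) hint.integrableOn hbot
  have h3 : ∫ x : ℝ, F' x = 0 := by
    rw [← intervalIntegral.integral_Iic_add_Ioi (b := (0:ℝ)) hint.integrableOn hint.integrableOn, h1, h2]
    ring
  have h4 : ∫ x : ℝ, F' x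
      = (∫ x : ℝ, Real.exp (-b * x ^ 2)) - (2*b) * ∫ x : ℝ, x ^ 2 * Real.exp (-b * x ^ 2) := by
    have : F' = fun x : ℝ => Real.exp (-b * x ^ 2) - (2*b) * (x ^ 2 * Real.exp (-b * x ^ 2)) := by
      funext x; simp only [hF']; ring
    rw [this, integral_sub (integrable_exp_neg_mul_sq hb)
      ((integrable_sq_mul_exp_neg_mul_sq hb).const_mul _), integral_const_mul]
  rw [h4, integral_gaussian] at h3
  have hb2 : (2*b) ≠ 0 := by positivity
  field_simp at h3 ⊢
  linarith

lemma integral_mul_exp_neg_mul_sq_zero {b : ℝ} (hb : 0 < b) :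
    ∫ x : ℝ, x * Real.exp (-b * x ^ 2) = 0 := by
  have h := integral_neg_eq_self (fun x : ℝ => x * Real.exp (-b * x ^ 2)) (volume : Measure ℝ)
  simp only [neg_sq, neg_mul] at h
  have h2 : ∫ x : ℝ, -(x * Real.exp (-(b * x ^ 2))) = -∫ x : ℝ, x * Real.exp (-(b * x ^ 2)) :=
    integral_neg _
  rw [h2] at h
  simp only [neg_mul]
  linarith

lemma gauss_exp_eq {v : ℝ} (hv : 0 < v) (u : ℝ) :
    Real.exp (-u ^ 2 / (2 * v)) = Real.exp (-(2*v)⁻¹ * u ^ 2) := by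
  congr 1; ring

lemma integrable_sq_mul_gauss_shift {v : ℝ} (hv : 0 < v) (m : ℝ) :
    Integrable fun x : ℝ => x ^ 2 * Real.exp (-(x - m) ^ 2 / (2 * v)) := by
  have hb : 0 < (2*v)⁻¹ := by positivity
  have hg : Integrable fun z : ℝ => (z + m) ^ 2 * Real.exp (-(2*v)⁻¹ * z ^ 2) := by
    have : (fun z : ℝ => (z + m) ^ 2 * Real.exp (-(2*v)⁻¹ * z ^ 2))
        = fun z : ℝ => (z ^ 2 * Real.exp (-(2*v)⁻¹ * z ^ 2)
            + (2*m) * (z * Real.exp (-(2*v)⁻¹ * z ^ 2)))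
            + m ^ 2 * Real.exp (-(2*v)⁻¹ * z ^ 2) := by
      funext z; ring
    rw [this]
    exact ((integrable_sq_mul_exp_neg_mul_sq hb).add
      ((integrable_mul_exp_neg_mul_sq hb).const_mul _)).add
      ((integrable_exp_neg_mul_sq hb).const_mul _)
  have := hg.comp_sub_right m
  simp only [sub_add_cancel] at this
  refine this.congr (Filter.Eventually.of_forall fun x => ?_)
  show x ^ 2 * Real.exp (-(2*v)⁻¹ * (x - m) ^ 2) = x ^ 2 * Real.exp (-(x - m) ^ 2 / (2 * v))
  rw [gauss_exp_eq hv]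

lemma integral_sq_mul_gauss_shift {v : ℝ} (hv : 0 < v) (m : ℝ) :
    ∫ x : ℝ, x ^ 2 * Real.exp (-(x - m) ^ 2 / (2 * v))
      = Real.sqrt (2 * Real.pi * v) * (v + m ^ 2) := by
  have hb : 0 < (2*v)⁻¹ := by positivity
  have h1 : (fun x : ℝ => x ^ 2 * Real.exp (-(x - m) ^ 2 / (2 * v)))
      = fun x : ℝ => (fun z : ℝ => (z + m) ^ 2 * Real.exp (-(2*v)⁻¹ * z ^ 2)) (x - m) := by
    funext x
    simp only [sub_add_cancel]
    rw [gauss_exp_eq hv]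
  rw [h1, integral_sub_right_eq_self (μ := volume) (fun z : ℝ => (z + m) ^ 2 * Real.exp (-(2*v)⁻¹ * z ^ 2)) m]
  have h2 : (fun z : ℝ => (z + m) ^ 2 * Real.exp (-(2*v)⁻¹ * z ^ 2))
      = fun z : ℝ => (z ^ 2 * Real.exp (-(2*v)⁻¹ * z ^ 2)
          + (2*m) * (z * Real.exp (-(2*v)⁻¹ * z ^ 2)))
          + m ^ 2 * Real.exp (-(2*v)⁻¹ * z ^ 2) := by
    funext z; ring
  rw [h2]
  have I1 : Integrable fun z : ℝ => z ^ 2 * Real.exp (-(2*v)⁻¹ * z ^ 2) :=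
    integrable_sq_mul_exp_neg_mul_sq hb
  have I2 : Integrable fun z : ℝ => 2 * m * (z * Real.exp (-(2*v)⁻¹ * z ^ 2)) :=
    (integrable_mul_exp_neg_mul_sq hb).const_mul _
  have I3 : Integrable fun z : ℝ => m ^ 2 * Real.exp (-(2*v)⁻¹ * z ^ 2) :=
    (integrable_exp_neg_mul_sq hb).const_mul _
  have I12 : Integrable fun z : ℝ => z ^ 2 * Real.exp (-(2*v)⁻¹ * z ^ 2)
      + 2 * m * (z * Real.exp (-(2*v)⁻¹ * z ^ 2)) := by exact I1.add I2
  rw [integral_add I12 I3, integral_add I1 I2,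
    integral_const_mul, integral_const_mul,
    integral_sq_mul_exp_neg_mul_sq hb, integral_mul_exp_neg_mul_sq_zero hb,
    integral_gaussian]
  have hπ : Real.pi / (2*v)⁻¹ = 2 * Real.pi * v := by field_simp
  rw [hπ]
  have hs : Real.sqrt (2 * Real.pi * v) ≥ 0 := Real.sqrt_nonneg _
  field_simp
  ring

lemma main_calc (σ a c : ℝ) (hσ : 0 < σ) (ha : 0 < a) (hc : 0 < c)
    (htrig : a ^ 2 * c ^ 2 + c ^ 2 = 1)
    (u₀ : ℝ → ℝ) (hmeas : Measurable u₀) (hnn : ∀ x, 0 ≤ u₀ x)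
    (hmass : ∫ y : ℝ, u₀ y = 1)
    (Ia : Integrable fun y : ℝ => Real.exp (a * y ^ 2 / (2 * σ)) * u₀ y)
    (I2 : Integrable fun y : ℝ => Real.exp (a * y ^ 2 / (2 * σ)) * y ^ 2 * u₀ y) :
    Integrable (fun x : ℝ => x ^ 2 *
      ((Real.sqrt (2 * Real.pi * σ * a))⁻¹ * Real.exp (a * x ^ 2 / (2 * σ))
        * (∫ y : ℝ, Real.exp (-(x / c - y) ^ 2 / (2 * σ * a)) * u₀ y)
        / (∫ y : ℝ, Real.exp (a * y ^ 2 / (2 * σ)) * u₀ y))) ∧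
    (∫ x : ℝ, x ^ 2 *
      ((Real.sqrt (2 * Real.pi * σ * a))⁻¹ * Real.exp (a * x ^ 2 / (2 * σ))
        * (∫ y : ℝ, Real.exp (-(x / c - y) ^ 2 / (2 * σ * a)) * u₀ y)
        / (∫ y : ℝ, Real.exp (a * y ^ 2 / (2 * σ)) * u₀ y)))
      = σ * a
        + (c ^ 2)⁻¹ * (∫ y : ℝ, Real.exp (a * y ^ 2 / (2 * σ)) * y ^ 2 * u₀ y)
          / (∫ y : ℝ, Real.exp (a * y ^ 2 / (2 * σ)) * u₀ y) := by
  have hv : 0 < σ * a := by positivity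
  set E : ℝ → ℝ := fun y => Real.exp (a * y ^ 2 / (2 * σ)) with hE
  set Z : ℝ := ∫ y : ℝ, E y * u₀ y with hZ
  set N : ℝ := (Real.sqrt (2 * Real.pi * σ * a))⁻¹ with hN
  -- positivity of Z
  have hu₀int : Integrable u₀ := by
    refine Ia.mono' hmeas.aestronglyMeasurable (Eventually.of_forall fun y => ?_)
    rw [Real.norm_eq_abs, abs_of_nonneg (hnn y)]
    exact le_mul_of_one_le_left (hnn y) (Real.one_le_exp (by positivity))
  have hZ1 : 1 ≤ Z := by
    rw [hZ, ← hmass]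
    refine integral_mono hu₀int Ia fun y => ?_
    exact le_mul_of_one_le_left (hnn y) (Real.one_le_exp (by positivity))
  have hZ0 : (0:ℝ) < Z := lt_of_lt_of_le one_pos hZ1
  -- normalization constant
  have hNs : Real.sqrt (2 * Real.pi * (σ * a)) = Real.sqrt (2 * Real.pi * σ * a) := by
    congr 1; ring
  have hNpos : 0 < Real.sqrt (2 * Real.pi * σ * a) := by
    apply Real.sqrt_pos.mpr; positivity
  have hNmul : N * Real.sqrt (2 * Real.pi * (σ * a)) = 1 := by
    rw [hNs, hN, inv_mul_cancel₀ hNpos.ne']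
  -- key exponential identity
  have hexp : ∀ x y : ℝ, E y * Real.exp (-(x - y / c) ^ 2 / (2 * (σ * a)))
      = Real.exp (a * x ^ 2 / (2 * σ)) * Real.exp (-(x / c - y) ^ 2 / (2 * σ * a)) := by
    intro x y
    rw [hE, ← Real.exp_add, ← Real.exp_add]
    congr 1
    field_simp
    ring_nf
    linear_combination (y^2 - x^2) * htrig
  -- the two-variable integrand
  set G : ℝ → ℝ → ℝ := fun x y => x ^ 2 *
    (E y * (N * Real.exp (-(x - y / c) ^ 2 / (2 * (σ * a)))) * u₀ y) with hG
  have hGnn : ∀ x y, 0 ≤ G x y := by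
    intro x y
    apply mul_nonneg (sq_nonneg x)
    apply mul_nonneg (mul_nonneg (Real.exp_pos _).le
      (mul_nonneg (by positivity) (Real.exp_pos _).le)) (hnn y)
  -- measurability
  have hGmeas : AEStronglyMeasurable (Function.uncurry G) ((volume : Measure ℝ).prod volume) := by
    apply Measurable.aestronglyMeasurable
    apply Measurable.mul
    · exact (measurable_fst.pow measurable_const)
    apply Measurable.mul
    · apply Measurable.mul
      · exact (((measurable_snd.pow measurable_const).const_mul a).div_const _).exp
      · exact ((((measurable_fst.sub (measurable_snd.div_const c)).pow
          measurable_const).neg.div_const _).exp).const_mul N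
    · exact hmeas.comp measurable_snd
  -- integrability in x for each y
  have hxint : ∀ y : ℝ, Integrable fun x : ℝ => G x y := by
    intro y
    have h := (integrable_sq_mul_gauss_shift hv (y / c)).const_mul (E y * N * u₀ y)
    refine h.congr (Eventually.of_forall fun x => ?_)
    simp only [hG]; ring
  -- inner integral value
  have hinner : ∀ y : ℝ, ∫ x : ℝ, G x y = E y * u₀ y * (σ * a + (y / c) ^ 2) := by
    intro y
    have h1 : (fun x : ℝ => G x y) = fun x : ℝ =>
        (E y * N * u₀ y) * (x ^ 2 * Real.exp (-(x - y / c) ^ 2 / (2 * (σ * a)))) := by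
      funext x; simp only [hG]; ring
    rw [h1, integral_const_mul, integral_sq_mul_gauss_shift hv (y / c)]
    rw [show E y * N * u₀ y * (Real.sqrt (2 * Real.pi * (σ * a)) * (σ * a + (y / c) ^ 2))
        = (N * Real.sqrt (2 * Real.pi * (σ * a))) * (E y * u₀ y * (σ * a + (y / c) ^ 2)) from by
        ring, hNmul, one_mul]
  -- integrability of the y-marginal
  have hyint : Integrable fun y : ℝ => E y * u₀ y * (σ * a + (y / c) ^ 2) := by
    have h := (Ia.const_mul (σ * a)).add (I2.const_mul (c ^ 2)⁻¹)
    refine (by exact h : Integrable fun y : ℝ =>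
      (σ * a) * (E y * u₀ y) + (c ^ 2)⁻¹ * (E y * y ^ 2 * u₀ y)).congr
      (Eventually.of_forall fun y => ?_)
    simp only [hE]
    field_simp
  -- integrability on the product space
  have hFint : Integrable (Function.uncurry G) ((volume : Measure ℝ).prod volume) := by
    rw [integrable_prod_iff' hGmeas]
    constructor
    · exact Eventually.of_forall fun y => hxint y
    · refine hyint.congr (Eventually.of_forall fun y => ?_)
      have : ∫ x : ℝ, ‖Function.uncurry G (x, y)‖ = ∫ x : ℝ, G x y := by
        congr 1; funext x
        rw [Function.uncurry_apply_pair, Real.norm_eq_abs, abs_of_nonneg (hGnn x y)]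
      show E y * u₀ y * (σ * a + (y / c) ^ 2) = ∫ x : ℝ, ‖Function.uncurry G (x, y)‖
      rw [this, hinner y]
  -- rewrite the integrand of the statement
  have huT : ∀ x : ℝ, x ^ 2 * (N * Real.exp (a * x ^ 2 / (2 * σ))
      * (∫ y : ℝ, Real.exp (-(x / c - y) ^ 2 / (2 * σ * a)) * u₀ y) / Z)
      = Z⁻¹ * ∫ y : ℝ, G x y := by
    intro x
    have h1 : (fun y : ℝ => G x y) = fun y : ℝ =>
        (x ^ 2 * N * Real.exp (a * x ^ 2 / (2 * σ)))
          * (Real.exp (-(x / c - y) ^ 2 / (2 * σ * a)) * u₀ y) := by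
      funext y
      simp only [hG]
      rw [show x ^ 2 * (E y * (N * Real.exp (-(x - y / c) ^ 2 / (2 * (σ * a)))) * u₀ y)
          = x ^ 2 * N * (E y * Real.exp (-(x - y / c) ^ 2 / (2 * (σ * a)))) * u₀ y by ring,
        hexp x y]
      ring
    rw [h1, integral_const_mul]
    field_simp
  have hmain : (fun x : ℝ => x ^ 2 *
      (N * Real.exp (a * x ^ 2 / (2 * σ))
        * (∫ y : ℝ, Real.exp (-(x / c - y) ^ 2 / (2 * σ * a)) * u₀ y) / Z))
      = fun x : ℝ => Z⁻¹ * ∫ y : ℝ, G x y := funext huT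
  constructor
  · rw [hmain]
    exact (hFint.integral_prod_left).const_mul _
  · rw [hmain, integral_const_mul, integral_integral_swap hFint]
    have h2 : ∫ y : ℝ, ∫ x : ℝ, G x y = (σ * a) * Z + (c ^ 2)⁻¹ * ∫ y : ℝ, E y * y ^ 2 * u₀ y := by
      rw [show (fun y : ℝ => ∫ x : ℝ, G x y) = fun y : ℝ => E y * u₀ y * (σ * a + (y / c) ^ 2)
        from funext hinner]
      have split : (fun y : ℝ => E y * u₀ y * (σ * a + (y / c) ^ 2))
          = fun y : ℝ => (σ * a) * (E y * u₀ y) + (c ^ 2)⁻¹ * (E y * y ^ 2 * u₀ y) := by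
        funext y
        simp only [hE]
        field_simp
      rw [split, integral_add (Ia.const_mul _) (I2.const_mul _),
        integral_const_mul, integral_const_mul, ← hZ]
    rw [h2]
    field_simp
    congr 1
    refine integral_congr_ae (Eventually.of_forall fun y => ?_)
    simp only [hE]
    rw [show a * y ^ 2 / (σ * 2) = a * y ^ 2 / (2 * σ) by ring]
    ring

theorem second_moment_of_explicit_solution_pos_quadratic
    (σ : ℝ) (hσ : 0 < σ) (u₀ : ℝ → ℝ) (hmeas : Measurable u₀)
    (hnn : ∀ x, 0 ≤ u₀ x) (hmass : ∫ y : ℝ, u₀ y = 1)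
    (t : ℝ) (ht : 0 < t) (ht' : t < Tmax σ u₀) :
    Integrable (fun x : ℝ => x ^ 2 * uTrig σ u₀ t x) ∧
    (∫ x : ℝ, x ^ 2 * uTrig σ u₀ t x)
      = σ * Real.tan (2 * σ * t)
        + ((Real.cos (2 * σ * t)) ^ 2)⁻¹
          * (∫ y : ℝ, Real.exp (Real.tan (2 * σ * t) * y ^ 2 / (2 * σ)) * y ^ 2 * u₀ y)
          / (∫ y : ℝ, Real.exp (Real.tan (2 * σ * t) * y ^ 2 / (2 * σ)) * u₀ y) := by
  rw [Tmax] at ht'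
  obtain ⟨s, hsS, hts⟩ := exists_lt_of_lt_csSup
    (by
      by_contra h
      rw [Set.not_nonempty_iff_eq_empty] at h
      rw [h, Real.sSup_empty] at ht'
      linarith) ht'
  obtain ⟨hs0, hsπ, hsint⟩ := hsS
  have hθt : 0 < 2 * σ * t := by positivity
  have h4 : s * (4 * σ) < Real.pi := (lt_div_iff₀ (by positivity)).mp hsπ
  have hθs : 2 * σ * s < Real.pi / 2 := by linarith
  have hts2 : 2 * σ * t < 2 * σ * s := by nlinarith
  have hapos : 0 < Real.tan (2 * σ * t) :=
    Real.tan_pos_of_pos_of_lt_pi_div_two hθt (by linarith)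
  have hcpos : 0 < Real.cos (2 * σ * t) :=
    Real.cos_pos_of_mem_Ioo ⟨by linarith [Real.pi_pos], by linarith⟩
  have htrig : Real.tan (2 * σ * t) ^ 2 * Real.cos (2 * σ * t) ^ 2
      + Real.cos (2 * σ * t) ^ 2 = 1 := by
    have hsc := Real.sin_sq_add_cos_sq (2 * σ * t)
    have h1 : Real.tan (2 * σ * t) * Real.cos (2 * σ * t) = Real.sin (2 * σ * t) := by
      rw [Real.tan_eq_sin_div_cos]; field_simp
    linear_combination (Real.tan (2 * σ * t) * Real.cos (2 * σ * t) + Real.sin (2 * σ * t)) * h1 + hsc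
  have hab : Real.tan (2 * σ * t) < Real.tan (2 * σ * s) :=
    Real.tan_lt_tan_of_nonneg_of_lt_pi_div_two hθt.le hθs hts2
  set a : ℝ := Real.tan (2 * σ * t) with ha
  set b : ℝ := Real.tan (2 * σ * s) with hb
  have hmeasE : ∀ r : ℝ, Measurable fun y : ℝ => Real.exp (r * y ^ 2 / (2 * σ)) * u₀ y :=
    fun r => ((((measurable_id.pow measurable_const).const_mul r).div_const _).exp).mul hmeas
  have Ia : Integrable fun y : ℝ => Real.exp (a * y ^ 2 / (2 * σ)) * u₀ y := by
    refine hsint.mono' (hmeasE a).aestronglyMeasurable (Eventually.of_forall fun y => ?_)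
    rw [Real.norm_eq_abs, abs_of_nonneg (mul_nonneg (Real.exp_pos _).le (hnn y))]
    apply mul_le_mul_of_nonneg_right _ (hnn y)
    apply Real.exp_le_exp.mpr
    gcongr
  have I2 : Integrable fun y : ℝ => Real.exp (a * y ^ 2 / (2 * σ)) * y ^ 2 * u₀ y := by
    set δ : ℝ := (b - a) / (2 * σ) with hδ
    have hδpos : 0 < δ := by apply div_pos (by linarith) (by positivity)
    have hmeas2 : Measurable fun y : ℝ => Real.exp (a * y ^ 2 / (2 * σ)) * y ^ 2 * u₀ y :=
      (((((measurable_id.pow measurable_const).const_mul a).div_const _).exp.mul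
        (measurable_id.pow measurable_const))).mul hmeas
    refine (hsint.const_mul δ⁻¹).mono' hmeas2.aestronglyMeasurable
      (Eventually.of_forall fun y => ?_)
    rw [Real.norm_eq_abs, abs_of_nonneg (mul_nonneg (mul_nonneg (Real.exp_pos _).le
      (sq_nonneg y)) (hnn y))]
    have hy2 : y ^ 2 ≤ δ⁻¹ * Real.exp (δ * y ^ 2) := by
      have h1 := Real.add_one_le_exp (δ * y ^ 2)
      have h3 : δ * y ^ 2 ≤ Real.exp (δ * y ^ 2) := by linarith
      have h4 : δ⁻¹ * (δ * y ^ 2) = y ^ 2 := by field_simp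
      have h5 := mul_le_mul_of_nonneg_left h3 (inv_pos.mpr hδpos).le
      linarith
    have hcomb : Real.exp (a * y ^ 2 / (2 * σ)) * Real.exp (δ * y ^ 2)
        = Real.exp (b * y ^ 2 / (2 * σ)) := by
      rw [← Real.exp_add]; congr 1; rw [hδ]; field_simp; ring
    calc Real.exp (a * y ^ 2 / (2 * σ)) * y ^ 2 * u₀ y
        ≤ Real.exp (a * y ^ 2 / (2 * σ)) * (δ⁻¹ * Real.exp (δ * y ^ 2)) * u₀ y := by
          apply mul_le_mul_of_nonneg_right _ (hnn y)
          exact mul_le_mul_of_nonneg_left hy2 (Real.exp_pos _).le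
      _ = δ⁻¹ * (Real.exp (b * y ^ 2 / (2 * σ)) * u₀ y) := by rw [← hcomb]; ring
  have H := main_calc σ a (Real.cos (2 * σ * t)) hσ hapos hcpos htrig u₀ hmeas hnn hmass Ia I2
  simpa only [uTrig] using H
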